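/- Let f be analytic on the open unit disc and continuous on the closed disc minus {1}, and suppose f is analytic on a Δ-domain Δ(θ, r) = {z : |z| < r, z ≠ 1, θ < |Arg(z-1)|} for some r > 1 and 0 < θ < π/2. If f(z) = O((1-z)^(-α)) as z → 1 in Δ for some real α > 0, then there exists a constant K with |[z^n] f(z)| ≤ K · n^(α-1) for all n ≥ 1. -/

import Mathlib

open Complex Metric Set
open MeasureTheory intervalIntegral


lemma SA_orth (n k : ℕ) :
    (∫ t in (0:ℝ)..(2*Real.pi), Complex.exp ((((k:ℂ) - n) * t) * I))
      = if k = n then (2*Real.pi : ℂ) else 0 := by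
  rcases eq_or_ne k n with h | h
  · subst h
    simp [intervalIntegral.integral_const]
  · rw [if_neg h]
    have hc : ((k:ℂ) - n) * I ≠ 0 := by
      simp only [ne_eq, mul_eq_zero, I_ne_zero, or_false, sub_eq_zero]
      exact_mod_cast h
    have h2 := integral_exp_mul_complex (a := 0) (b := 2*Real.pi) hc
    have he : Complex.exp ((((k:ℂ) - n) * I) * ((2*Real.pi : ℝ) : ℂ)) = 1 := by
      have := Complex.exp_int_mul_two_pi_mul_I ((k:ℤ) - n)
      rw [← this]
      congr 1
      push_cast
      ring
    rw [show (fun t : ℝ => Complex.exp ((((k:ℂ) - n) * t) * I)) = fun t : ℝ => Complex.exp ((((k:ℂ) - n) * I) * t) by funext t; ring_nf]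
    rw [h2, he]
    simp

lemma SA_coeff (f : ℂ → ℂ) (a : ℕ → ℂ)
    (hcoeff : ∀ z ∈ ball (0 : ℂ) 1, HasSum (fun k : ℕ => a k * z ^ k) (f z))
    (ρ : ℝ) (hρ0 : 0 < ρ) (hρ1 : ρ < 1) (n : ℕ) :
    (∫ t in (0:ℝ)..(2 * Real.pi),
        f ((ρ : ℂ) * Complex.exp (t * I)) * Complex.exp (-((n : ℂ) * t) * I))
      = 2 * Real.pi * a n * (ρ : ℂ) ^ n := by
  have hπ : (0:ℝ) ≤ 2 * Real.pi := by positivity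
  -- membership of the circle points
  have hmem : ∀ t : ℝ, (ρ : ℂ) * Complex.exp (t * I) ∈ ball (0:ℂ) 1 := by
    intro t
    simp only [mem_ball, dist_zero_right, norm_mul, Real.norm_eq_abs, Complex.norm_exp,
      Complex.norm_real, Complex.mul_I_re, Complex.ofReal_im, neg_zero, Real.exp_zero, mul_one]
    rw [abs_of_pos hρ0]; exact hρ1
  -- summability of coefficients at radius ρ
  have hsum : Summable (fun k : ℕ => ‖a k‖ * ρ ^ k) := by
    set σ : ℝ := (1 + ρ) / 2 with hσdef
    have hρσ : ρ < σ := by rw [hσdef]; linarith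
    have hσ1 : σ < 1 := by rw [hσdef]; linarith
    have hσ0 : 0 < σ := by rw [hσdef]; linarith
    have h1 : HasSum (fun k : ℕ => a k * (σ:ℂ) ^ k) (f σ) := by
      apply hcoeff
      simp only [mem_ball, dist_zero_right, Real.norm_eq_abs, Complex.norm_real]
      rw [abs_of_pos hσ0]; exact hσ1
    have h2 : Summable (fun k : ℕ => ‖a k * (σ:ℂ) ^ k‖) := by
      rw [summable_norm_iff]; exact h1.summable
    have h3 : (fun k : ℕ => ‖a k * (σ:ℂ) ^ k‖) = fun k => ‖a k‖ * σ ^ k := by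
      funext k
      simp only [norm_mul, norm_pow, Real.norm_eq_abs, Complex.norm_real]
      rw [abs_of_pos hσ0]
    rw [h3] at h2
    apply Summable.of_nonneg_of_le (fun k => by positivity) (fun k => ?_) h2
    exact mul_le_mul_of_nonneg_left (pow_le_pow_left₀ hρ0.le hρσ.le k) (norm_nonneg _)
  -- the integrand as a tsum
  set F : ℕ → ℝ → ℂ := fun k t => (a k * (ρ:ℂ) ^ k) * Complex.exp ((((k:ℂ) - n) * t) * I) with hF
  have hFeq : ∀ t : ℝ, f ((ρ : ℂ) * Complex.exp (t * I)) * Complex.exp (-((n : ℂ) * t) * I)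
      = ∑' k, F k t := by
    intro t
    have h1 := (hcoeff _ (hmem t)).mul_right (Complex.exp (-((n : ℂ) * t) * I))
    have h2 : (fun k : ℕ => a k * ((ρ:ℂ) * Complex.exp (t * I)) ^ k * Complex.exp (-((n : ℂ) * t) * I)) = fun k => F k t := by
      funext k
      rw [hF]
      simp only [mul_pow, ← Complex.exp_nat_mul]
      rw [show (((k:ℂ) - n) * t) * I = (k:ℂ) * ((t:ℂ) * I) + (-((n:ℂ) * t) * I) by ring, Complex.exp_add]
      ring
    rw [h2] at h1
    exact h1.tsum_eq.symm
  have hFnorm : ∀ k t, ‖F k t‖ = ‖a k‖ * ρ ^ k := by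
    intro k t
    rw [hF]
    have hre : ((((k:ℂ) - n) * (t:ℂ)) * I).re = 0 := by
      simp [Complex.mul_I_re, Complex.mul_im, Complex.ofReal_re, Complex.ofReal_im]
    simp only [norm_mul, norm_pow, Real.norm_eq_abs, Complex.norm_real, Complex.norm_exp,
      hre, Real.exp_zero, mul_one, abs_of_pos hρ0]
  -- swap integral and sum
  have hswap : (∫ t in (0:ℝ)..(2 * Real.pi), ∑' k, F k t) = ∑' k, ∫ t in (0:ℝ)..(2 * Real.pi), F k t := by
    rw [intervalIntegral.integral_of_le hπ]
    have hmeas : ∀ k : ℕ, AEStronglyMeasurable (F k) (volume.restrict (Ioc (0:ℝ) (2*Real.pi))) := by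
      intro k
      apply Continuous.aestronglyMeasurable
      rw [hF]
      continuity
    rw [MeasureTheory.integral_tsum hmeas ?_]
    · congr 1
      funext k
      rw [intervalIntegral.integral_of_le hπ]
    · -- ∑' k, ∫⁻ ‖F k t‖₊ ≠ ⊤
      have hb : ∀ k : ℕ, (∫⁻ t in Ioc (0:ℝ) (2*Real.pi), ‖F k t‖₊)
          ≤ ENNReal.ofReal (‖a k‖ * ρ ^ k * (2 * Real.pi)) := by
        intro k
        calc (∫⁻ t in Ioc (0:ℝ) (2*Real.pi), ‖F k t‖₊)
            ≤ ∫⁻ _ in Ioc (0:ℝ) (2*Real.pi), ENNReal.ofReal (‖a k‖ * ρ ^ k) := by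
              apply lintegral_mono
              intro t
              simp only
              rw [← enorm_eq_nnnorm, ← ofReal_norm, hFnorm k t]
          _ = ENNReal.ofReal (‖a k‖ * ρ ^ k) * volume (Ioc (0:ℝ) (2*Real.pi)) := by
              rw [MeasureTheory.setLIntegral_const]
          _ = ENNReal.ofReal (‖a k‖ * ρ ^ k * (2 * Real.pi)) := by
              rw [Real.volume_Ioc, sub_zero, ← ENNReal.ofReal_mul (by positivity)]
      apply ne_top_of_le_ne_top ?_ (ENNReal.tsum_le_tsum hb)
      rw [← ENNReal.ofReal_tsum_of_nonneg (fun k => by positivity) (hsum.mul_right _)]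
      exact ENNReal.ofReal_ne_top
  calc (∫ t in (0:ℝ)..(2 * Real.pi),
        f ((ρ : ℂ) * Complex.exp (t * I)) * Complex.exp (-((n : ℂ) * t) * I))
      = ∫ t in (0:ℝ)..(2 * Real.pi), ∑' k, F k t := by
        congr 1; funext t; exact hFeq t
    _ = ∑' k, ∫ t in (0:ℝ)..(2 * Real.pi), F k t := hswap
    _ = ∑' k : ℕ, (a k * (ρ:ℂ) ^ k) * (if k = n then (2*Real.pi : ℂ) else 0) := by
        congr 1; funext k
        rw [hF]
        rw [intervalIntegral.integral_const_mul, SA_orth n k]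
    _ = 2 * Real.pi * a n * (ρ : ℂ) ^ n := by
        rw [tsum_eq_single n]
        · rw [if_pos rfl]; ring
        · intro k hk; simp [hk]

lemma SA_arg (θ : ℝ) (hθ0 : 0 < θ) (hθπ : θ ≤ Real.pi) (u : ℂ) (hu : u ≠ 0)
    (h : u.re < ‖u‖ * Real.cos θ) : θ < |Complex.arg u| := by
  by_contra h'
  push_neg at h'
  have h1 : Real.cos θ ≤ Real.cos |Complex.arg u| :=
    Real.cos_le_cos_of_nonneg_of_le_pi (abs_nonneg _) hθπ h'
  rw [Real.cos_abs] at h1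
  have h2 : Real.cos (Complex.arg u) = u.re / ‖u‖ := Complex.cos_arg hu
  have h3 : 0 < ‖u‖ := by
    simpa [norm_pos_iff] using hu
  rw [h2] at h1
  have h4 : ‖u‖ * Real.cos θ ≤ ‖u‖ * (u.re / ‖u‖) :=
    mul_le_mul_of_nonneg_left h1 h3.le
  rw [mul_div_cancel₀ _ h3.ne'] at h4
  linarith

lemma SA_rho_pow (n : ℕ) (hn : 1 ≤ n) : (1:ℝ)/3 ≤ ((n:ℝ)/((n:ℝ)+1)) ^ n := by
  have hn0 : (0:ℝ) < n := by exact_mod_cast hn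
  have h1 : ((n:ℝ)+1)/n ≤ Real.exp (1/n) := by
    have h := Real.add_one_le_exp (1/(n:ℝ))
    have : ((n:ℝ)+1)/n = 1/n + 1 := by field_simp; ring
    linarith
  have h2 : (((n:ℝ)+1)/n)^n ≤ Real.exp (1/n) ^ n :=
    pow_le_pow_left₀ (by positivity) h1 n
  have h3 : Real.exp (1/(n:ℝ)) ^ n = Real.exp 1 := by
    rw [← Real.exp_nat_mul]
    congr 1
    field_simp
  have h4 : (((n:ℝ)+1)/n)^n ≤ 3 := by
    rw [h3] at h2
    have := Real.exp_one_lt_d9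
    linarith
  have h5 : ((n:ℝ)/((n:ℝ)+1))^n = ((((n:ℝ)+1)/n)^n)⁻¹ := by
    rw [← inv_pow]
    congr 1
    rw [inv_div]
  rw [h5]
  have h6 : (0:ℝ) < (((n:ℝ)+1)/n)^n := by positivity
  rw [one_div, inv_le_inv₀ (by norm_num : (0:ℝ) < 3) h6]
  exact h4

lemma SA_geo
    (f : ℂ → ℂ) (r θ α : ℝ)
    (hr : 1 < r) (hθ0 : 0 < θ) (hθ : θ < Real.pi / 2) (hα : 0 < α)
    (Δ : Set ℂ)
    (hΔ : Δ = {z : ℂ | ‖z‖ < r ∧ z ≠ 1 ∧ θ < |Complex.arg (z - 1)|})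
    (hf_Δ : DifferentiableOn ℂ f Δ)
    (C : ℝ) (hC0 : 0 ≤ C)
    (hC : ∀ z ∈ Δ, ‖f z‖ ≤ C * ‖(1 : ℂ) - z‖ ^ (-α)) :
    ∃ c : ℝ, 0 < c ∧ ∀ z ∈ closedBall (0:ℂ) 1 \ {1},
      ‖deriv f z‖ ≤ (C * 2^α / c) * ‖(1:ℂ) - z‖ ^ (-(α+1)) := by
  have hπpos := Real.pi_pos
  set γ := Real.cos θ with hγdef
  have hγ0 : 0 < γ := Real.cos_pos_of_mem_Ioo ⟨by linarith, hθ⟩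
  set c := min (γ / (2*(1+γ))) ((r-1)/4) with hcdef
  have hc0 : 0 < c := lt_min (by positivity) (by linarith)
  have hcγ : c ≤ γ/(2*(1+γ)) := min_le_left _ _
  have hcr : c ≤ (r-1)/4 := min_le_right _ _
  have hchalf : c < 1/2 := by
    apply lt_of_le_of_lt hcγ
    rw [div_lt_div_iff₀ (by positivity) (by norm_num)]
    nlinarith
  refine ⟨c, hc0, ?_⟩
  intro z hz
  obtain ⟨hz1, hz2⟩ := hz
  rw [mem_closedBall, dist_zero_right] at hz1
  have hz2' : z ≠ 1 := by simpa using hz2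
  have hz1' : (0:ℝ) < ‖(1:ℂ) - z‖ := by
    rw [norm_pos_iff, sub_ne_zero]
    exact fun h => hz2' h.symm
  have hz1'' : ‖(1:ℂ) - z‖ ≤ 2 := by
    calc ‖(1:ℂ) - z‖ ≤ ‖(1:ℂ)‖ + ‖z‖ := norm_sub_le _ _
      _ ≤ 2 := by rw [norm_one]; linarith
  -- geometry: the closed ball around z is inside Δ and far from 1
  have hgeo : ∀ w ∈ closedBall z (c * ‖(1:ℂ) - z‖),
      w ∈ Δ ∧ ‖(1:ℂ) - z‖/2 ≤ ‖(1:ℂ) - w‖ := by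
    intro w hw
    rw [mem_closedBall, dist_eq_norm] at hw
    have hwz : ‖w - z‖ ≤ c * ‖(1:ℂ) - z‖ := hw
    have hw1 : ‖(1:ℂ) - z‖/2 ≤ ‖(1:ℂ) - w‖ := by
      have htri : ‖(1:ℂ) - z‖ ≤ ‖(1:ℂ) - w‖ + ‖w - z‖ := by
        calc ‖(1:ℂ) - z‖ = ‖((1:ℂ) - w) + (w - z)‖ := by congr 1; ring
          _ ≤ ‖(1:ℂ) - w‖ + ‖w - z‖ := norm_add_le _ _
      nlinarith
    refine ⟨?_, hw1⟩
    rw [hΔ]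
    have hwn : ‖w‖ < r := by
      calc ‖w‖ = ‖z + (w - z)‖ := by ring_nf
        _ ≤ ‖z‖ + ‖w - z‖ := norm_add_le _ _
        _ ≤ 1 + c * 2 := by nlinarith
        _ < r := by nlinarith
    have hw1' : w ≠ 1 := by
      intro h
      rw [h, sub_self, norm_zero] at hw1
      linarith
    refine ⟨hwn, hw1', ?_⟩
    apply SA_arg θ hθ0 (by linarith) _ (sub_ne_zero.mpr hw1')
    -- re (w - 1) < ‖w - 1‖ * cos θ
    have hre : (w - 1).re ≤ c * ‖(1:ℂ) - z‖ := by
      have h1 : (z - 1).re ≤ 0 := by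
        have := Complex.re_le_norm z
        rw [Complex.sub_re, Complex.one_re]
        linarith
      have h2 : (w - z).re ≤ ‖w - z‖ := by
        have := Complex.re_le_norm (w - z)
        linarith
      have h3 : (w - 1).re = (z - 1).re + (w - z).re := by
        simp only [Complex.sub_re, Complex.one_re]
        ring
      linarith
    have hnw1 : ‖w - 1‖ = ‖(1:ℂ) - w‖ := by rw [norm_sub_rev]
    rw [hnw1]
    have hkey : c * ‖(1:ℂ) - z‖ < ‖(1:ℂ) - w‖ * γ := by
      have h1 : c * ‖(1:ℂ) - z‖ ≤ (γ/(2*(1+γ))) * ‖(1:ℂ) - z‖ :=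
        mul_le_mul_of_nonneg_right hcγ hz1'.le
      have h2 : (γ/(2*(1+γ))) * ‖(1:ℂ) - z‖ < (γ/2) * ‖(1:ℂ) - z‖ := by
        apply mul_lt_mul_of_pos_right _ hz1'
        rw [div_lt_div_iff₀ (by positivity) (by norm_num)]
        nlinarith
      have h3 : (γ/2) * ‖(1:ℂ) - z‖ ≤ γ * ‖(1:ℂ) - w‖ := by nlinarith
      linarith
    calc (w - 1).re ≤ c * ‖(1:ℂ) - z‖ := hre
      _ < ‖(1:ℂ) - w‖ * γ := hkey
  -- Cauchy derivative estimate
  set R := c * ‖(1:ℂ) - z‖ with hRdef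
  have hR : 0 < R := by positivity
  have hsub : closedBall z R ⊆ Δ := fun w hw => (hgeo w hw).1
  have hd : DiffContOnCl ℂ f (ball z R) := by
    apply DifferentiableOn.diffContOnCl
    rw [closure_ball z hR.ne']
    exact hf_Δ.mono hsub
  have hM : ∀ w ∈ sphere z R, ‖f w‖ ≤ C * (2^α * ‖(1:ℂ) - z‖ ^ (-α)) := by
    intro w hw
    have hw' : w ∈ closedBall z R := sphere_subset_closedBall hw
    obtain ⟨hwΔ, hw1⟩ := hgeo w hw'
    have h1 : ‖f w‖ ≤ C * ‖(1:ℂ) - w‖ ^ (-α) := hC w hwΔ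
    have h2 : ‖(1:ℂ) - w‖ ^ (-α) ≤ (‖(1:ℂ) - z‖/2) ^ (-α) :=
      Real.rpow_le_rpow_of_nonpos (by positivity) hw1 (by linarith)
    have h3 : (‖(1:ℂ) - z‖/2) ^ (-α) = 2^α * ‖(1:ℂ) - z‖ ^ (-α) := by
      rw [Real.div_rpow hz1'.le (by norm_num : (0:ℝ) ≤ 2), Real.rpow_neg (by norm_num : (0:ℝ) ≤ 2)]
      field_simp
    calc ‖f w‖ ≤ C * ‖(1:ℂ) - w‖ ^ (-α) := h1
      _ ≤ C * ((‖(1:ℂ) - z‖/2) ^ (-α)) := mul_le_mul_of_nonneg_left h2 hC0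
      _ = C * (2^α * ‖(1:ℂ) - z‖ ^ (-α)) := by rw [h3]
  have hest := Complex.norm_deriv_le_of_forall_mem_sphere_norm_le hR hd hM
  calc ‖deriv f z‖ ≤ C * (2^α * ‖(1:ℂ) - z‖ ^ (-α)) / R := hest
    _ = (C * 2^α / c) * ‖(1:ℂ) - z‖ ^ (-(α+1)) := by
      rw [hRdef]
      rw [show -(α+1) = -α + (-1) by ring, Real.rpow_add hz1', Real.rpow_neg_one]
      field_simp

lemma SA_main (f : ℂ → ℂ) (a : ℕ → ℂ) (α : ℝ) (hα : 0 < α) (C₄ : ℝ) (hC₄0 : 0 ≤ C₄)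
    (hf_disc : DifferentiableOn ℂ f (ball 0 1))
    (hcoeff : ∀ z ∈ ball (0 : ℂ) 1, HasSum (fun k : ℕ => a k * z ^ k) (f z))
    (hder : ∀ z ∈ closedBall (0:ℂ) 1 \ {1}, ‖deriv f z‖ ≤ C₄ * ‖(1:ℂ) - z‖ ^ (-(α+1)))
    (n : ℕ) (hn : 1 ≤ n) :
    ‖a n‖ ≤ (3 * 2^α * (C₄ * (1 + 1/α))) * (n:ℝ)^(α-1) := by
  have hπpos := Real.pi_pos
  have hn0 : (0:ℝ) < n := by exact_mod_cast hn
  have hn1 : (1:ℝ) ≤ n := by exact_mod_cast hn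
  set m : ℝ := (n:ℝ) + 1 with hmdef
  have hm0 : (0:ℝ) < m := by positivity
  have hm1 : (1:ℝ) ≤ m := by simp only [hmdef]; linarith
  set ρ : ℝ := (n:ℝ)/m with hρdef
  have hρ0 : 0 < ρ := by positivity
  have hρ1 : ρ < 1 := by rw [hρdef, div_lt_one hm0]; simp only [hmdef]; linarith
  have hρhalf : 1/2 ≤ ρ := by rw [hρdef, le_div_iff₀ hm0]; simp only [hmdef]; linarith
  have h1ρ : 1 - ρ = 1/m := by
    rw [hρdef]
    field_simp
    simp only [hmdef]
    ring
  -- circle points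
  have hcirc : ∀ t : ℝ, ‖(ρ:ℂ) * Complex.exp ((t:ℂ) * I)‖ = ρ := by
    intro t
    rw [norm_mul, Complex.norm_real, Real.norm_eq_abs,
      abs_of_pos hρ0, Complex.norm_exp]
    have : ((t:ℂ) * I).re = 0 := by simp [Complex.mul_I_re]
    rw [this, Real.exp_zero, mul_one]
  have hmem : ∀ t : ℝ, (ρ:ℂ) * Complex.exp ((t:ℂ) * I) ∈ ball (0:ℂ) 1 := by
    intro t
    rw [mem_ball, dist_zero_right, hcirc]
    exact hρ1
  have hmem2 : ∀ t : ℝ, (ρ:ℂ) * Complex.exp ((t:ℂ) * I) ∈ closedBall (0:ℂ) 1 \ {1} := by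
    intro t
    refine ⟨ball_subset_closedBall (hmem t), ?_⟩
    simp only [mem_singleton_iff]
    intro h
    have := hcirc t
    rw [h, norm_one] at this
    linarith
  -- lower bounds for the distance to 1
  have hlow1 : ∀ t : ℝ, 1/m ≤ ‖1 - (ρ:ℂ) * Complex.exp ((t:ℂ) * I)‖ := by
    intro t
    calc 1/m = 1 - ρ := h1ρ.symm
      _ = ‖(1:ℂ)‖ - ‖(ρ:ℂ) * Complex.exp ((t:ℂ) * I)‖ := by rw [hcirc, norm_one]
      _ ≤ ‖1 - (ρ:ℂ) * Complex.exp ((t:ℂ) * I)‖ := norm_sub_norm_le _ _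
  have hpos : ∀ t : ℝ, 0 < ‖1 - (ρ:ℂ) * Complex.exp ((t:ℂ) * I)‖ := by
    intro t
    exact lt_of_lt_of_le (by positivity) (hlow1 t)
  have hlow2 : ∀ t ∈ Icc (0:ℝ) Real.pi, t/Real.pi ≤ ‖1 - (ρ:ℂ) * Complex.exp ((t:ℂ) * I)‖ := by
    intro t ht
    obtain ⟨ht0, htπ⟩ := ht
    rcases le_or_gt t (Real.pi/2) with h | h
    · have hsin : 2/Real.pi * t ≤ Real.sin t := Real.mul_le_sin ht0 h
      have hsinnn : 0 ≤ Real.sin t := Real.sin_nonneg_of_nonneg_of_le_pi ht0 htπ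
      have him : (1 - (ρ:ℂ) * Complex.exp ((t:ℂ) * I)).im = -(ρ * Real.sin t) := by
        simp [Complex.sub_im, Complex.mul_im, Complex.ofReal_re, Complex.ofReal_im,
          Complex.exp_ofReal_mul_I_im, Complex.exp_ofReal_mul_I_re]
      have hts : t/Real.pi ≤ ρ * Real.sin t := by
        have e1 : t/Real.pi = (1/2)*(2/Real.pi*t) := by field_simp
        have e2 : (1/2)*(2/Real.pi*t) ≤ (1/2)*Real.sin t := by linarith
        have e3 : (1/2)*Real.sin t ≤ ρ * Real.sin t := mul_le_mul_of_nonneg_right hρhalf hsinnn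
        linarith
      calc t/Real.pi ≤ ρ * Real.sin t := hts
        _ = |(1 - (ρ:ℂ) * Complex.exp ((t:ℂ) * I)).im| := by
            rw [him, abs_neg]
            exact (_root_.abs_of_nonneg (mul_nonneg hρ0.le hsinnn)).symm
        _ ≤ ‖1 - (ρ:ℂ) * Complex.exp ((t:ℂ) * I)‖ := by
            exact Complex.abs_im_le_norm _
    · have hcos : Real.cos t ≤ 0 :=
        Real.cos_nonpos_of_pi_div_two_le_of_le h.le (by linarith)
      have hre : (1 - (ρ:ℂ) * Complex.exp ((t:ℂ) * I)).re = 1 - ρ * Real.cos t := by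
        simp [Complex.sub_re, Complex.mul_re, Complex.ofReal_re, Complex.ofReal_im,
          Complex.exp_ofReal_mul_I_im, Complex.exp_ofReal_mul_I_re]
      have hren : (0:ℝ) ≤ 1 - ρ * Real.cos t := by nlinarith
      calc t/Real.pi ≤ 1 := by rw [div_le_one hπpos]; exact htπ
        _ ≤ |(1 - (ρ:ℂ) * Complex.exp ((t:ℂ) * I)).re| := by
            rw [hre, _root_.abs_of_nonneg hren]; nlinarith
        _ ≤ ‖1 - (ρ:ℂ) * Complex.exp ((t:ℂ) * I)‖ := by
            exact Complex.abs_re_le_norm _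
  -- the deriv-norm function and its bound
  set D : ℝ → ℝ := fun t => ‖deriv f ((ρ:ℂ) * Complex.exp ((t:ℂ) * I))‖ with hDdef
  set G : ℝ → ℝ := fun t => C₄ * ‖1 - (ρ:ℂ) * Complex.exp ((t:ℂ) * I)‖ ^ (-(α+1)) with hGdef
  have hDG : ∀ t : ℝ, D t ≤ G t := fun t => hder _ (hmem2 t)
  -- continuity
  have hdc : ContinuousOn (deriv f) (ball (0:ℂ) 1) :=
    ((hf_disc.analyticOnNhd isOpen_ball).deriv).continuousOn
  have hcm : Continuous fun t : ℝ => (ρ:ℂ) * Complex.exp ((t:ℂ) * I) := by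
    fun_prop
  have hDcont : Continuous D := (hdc.comp_continuous hcm hmem).norm
  have hGcont : Continuous G := by
    apply Continuous.mul continuous_const
    apply Continuous.rpow_const ((continuous_const.sub hcm).norm)
    intro t
    exact Or.inl (hpos t).ne'
  have hsymm : ∀ t : ℝ, ‖1 - (ρ:ℂ) * Complex.exp (((-t : ℝ):ℂ) * I)‖
      = ‖1 - (ρ:ℂ) * Complex.exp ((t:ℂ) * I)‖ := by
    intro t
    have hconj : (starRingEnd ℂ) (1 - (ρ:ℂ) * Complex.exp ((t:ℂ) * I))
        = 1 - (ρ:ℂ) * Complex.exp (((-t : ℝ):ℂ) * I) := by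
      rw [map_sub, map_one, map_mul, Complex.conj_ofReal, ← Complex.exp_conj]
      congr 2
      rw [map_mul, Complex.conj_ofReal, Complex.conj_I]
      push_cast
      ring
    rw [← hconj, RCLike.norm_conj]
  have hGsymm : ∀ t : ℝ, G (-t) = G t := by
    intro t
    simp only [hGdef]
    rw [hsymm t]
  -- integration by parts
  set u : ℝ → ℂ := fun t => f ((ρ:ℂ) * Complex.exp ((t:ℂ) * I)) with hudef
  set u' : ℝ → ℂ := fun t => deriv f ((ρ:ℂ) * Complex.exp ((t:ℂ) * I)) * ((ρ:ℂ) * Complex.exp ((t:ℂ) * I) * I) with hu'def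
  set v : ℝ → ℂ := fun t => (I/(n:ℂ)) * Complex.exp (-((n:ℂ) * (t:ℂ)) * I) with hvdef
  set v' : ℝ → ℂ := fun t => Complex.exp (-((n:ℂ) * (t:ℂ)) * I) with hv'def
  have hnC : ((n:ℂ)) ≠ 0 := by exact_mod_cast Nat.cast_ne_zero.mpr (by omega)
  have hu : ∀ t : ℝ, HasDerivAt u (u' t) t := by
    intro t
    have hg : HasDerivAt (fun s : ℝ => (ρ:ℂ) * Complex.exp ((s:ℂ) * I))
        ((ρ:ℂ) * Complex.exp ((t:ℂ) * I) * I) t := by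
      have h := hasDerivAt_circleMap (0:ℂ) ρ t
      have hfun : (circleMap (0:ℂ) ρ) = fun s : ℝ => (ρ:ℂ) * Complex.exp ((s:ℂ) * I) := by
        funext s
        simp [circleMap]
      have hval : circleMap (0:ℂ) ρ t * I = (ρ:ℂ) * Complex.exp ((t:ℂ) * I) * I := by
        simp [circleMap]
      rw [hval, hfun] at h
      exact h
    have hfz : HasDerivAt f (deriv f ((ρ:ℂ) * Complex.exp ((t:ℂ) * I)))
        ((ρ:ℂ) * Complex.exp ((t:ℂ) * I)) :=
      (hf_disc.differentiableAt (isOpen_ball.mem_nhds (hmem t))).hasDerivAt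
    exact hfz.comp t hg
  have hv : ∀ t : ℝ, HasDerivAt v (v' t) t := by
    intro t
    have h1 : HasDerivAt (fun s : ℝ => -((n:ℂ) * (s:ℂ)) * I) (-(n:ℂ) * I) t := by
      have he : HasDerivAt (fun w : ℂ => -((n:ℂ) * w) * I) (-(n:ℂ) * I) ((t:ℂ)) := by
        have hfn : (fun w : ℂ => -((n:ℂ) * w) * I) = fun w : ℂ => (-(n:ℂ) * I) * w := by
          funext w
          ring
        rw [hfn]
        simpa using (hasDerivAt_id ((t:ℂ))).const_mul (-(n:ℂ) * I)
      exact he.comp_ofReal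
    have h2 := h1.cexp
    have h3 := h2.const_mul (I/(n:ℂ))
    have heq : (I/(n:ℂ)) * (Complex.exp (-((n:ℂ) * (t:ℂ)) * I) * (-(n:ℂ) * I)) = v' t := by
      rw [hv'def]
      have hI : (I/(n:ℂ)) * (Complex.exp (-((n:ℂ) * (t:ℂ)) * I) * (-(n:ℂ) * I))
          = Complex.exp (-((n:ℂ) * (t:ℂ)) * I) * (-(I*I)) * ((n:ℂ)/(n:ℂ)) := by
        ring
      rw [hI, Complex.I_mul_I, div_self hnC]
      ring
    rw [← heq]
    exact h3
  have hiv : IntervalIntegrable u' volume 0 (2*Real.pi) := by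
    apply Continuous.intervalIntegrable
    exact ((hdc.comp_continuous hcm hmem).mul (hcm.mul continuous_const))
  have hvv : IntervalIntegrable v' volume 0 (2*Real.pi) := by
    apply Continuous.intervalIntegrable
    fun_prop
  have hibp := intervalIntegral.integral_mul_deriv_eq_deriv_mul
    (fun x _ => hu x) (fun x _ => hv x) hiv hvv
  -- boundary terms vanish
  have hbd : u (2*Real.pi) * v (2*Real.pi) - u 0 * v 0 = 0 := by
    have e1 : Complex.exp (((2*Real.pi : ℝ):ℂ) * I) = Complex.exp (((0:ℝ):ℂ) * I) := by
      push_cast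
      rw [Complex.exp_two_pi_mul_I]
      simp
    have e2 : Complex.exp (-((n:ℂ) * ((2*Real.pi : ℝ):ℂ)) * I) = Complex.exp (-((n:ℂ) * ((0:ℝ):ℂ)) * I) := by
      have h := Complex.exp_int_mul_two_pi_mul_I (-(n:ℤ))
      have : -((n:ℂ) * ((2*Real.pi : ℝ):ℂ)) * I = ((-(n:ℤ) : ℤ):ℂ) * (2 * Real.pi * I) := by
        push_cast
        ring
      rw [this, h]
      simp
    simp only [hudef, hvdef, e1, e2]
    ring
  -- key identity
  have key := SA_coeff f a hcoeff ρ hρ0 hρ1 n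
  have key2 : (2 * Real.pi : ℂ) * a n * (ρ:ℂ) ^ n = -∫ t in (0:ℝ)..(2*Real.pi), u' t * v t := by
    rw [← key]
    have : (∫ t in (0:ℝ)..(2 * Real.pi),
        f ((ρ : ℂ) * Complex.exp (t * I)) * Complex.exp (-((n : ℂ) * t) * I))
        = ∫ t in (0:ℝ)..(2*Real.pi), u t * v' t := rfl
    rw [this, hibp, hbd]
    ring
  -- norm inequality for the coefficient
  have hnorm1 : 2*Real.pi * ‖a n‖ * ρ^n ≤ (1/(n:ℝ)) * ∫ t in (0:ℝ)..(2*Real.pi), D t := by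
    have hL : ‖(2 * Real.pi : ℂ) * a n * (ρ:ℂ) ^ n‖ = 2*Real.pi * ‖a n‖ * ρ^n := by
      rw [norm_mul, norm_mul, norm_pow]
      have e1 : ‖(2 * Real.pi : ℂ)‖ = 2*Real.pi := by
        rw [show (2 * Real.pi : ℂ) = ((2*Real.pi : ℝ) : ℂ) by push_cast; ring]
        rw [Complex.norm_real, Real.norm_eq_abs, _root_.abs_of_pos (by positivity)]
      have e2 : ‖(ρ:ℂ)‖ = ρ := by
        rw [Complex.norm_real, Real.norm_eq_abs, _root_.abs_of_pos hρ0]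
      rw [e1, e2]
    have hvn : ∀ t : ℝ, ‖v t‖ = 1/(n:ℝ) := by
      intro t
      simp only [hvdef]
      rw [norm_mul, norm_div, Complex.norm_I]
      have e3 : ‖((n:ℕ):ℂ)‖ = (n:ℝ) := by
        rw [Complex.norm_natCast]
      have e4 : ‖Complex.exp (-((n:ℂ) * (t:ℂ)) * I)‖ = 1 := by
        rw [Complex.norm_exp]
        have : (-((n:ℂ) * (t:ℂ)) * I).re = 0 := by
          simp [Complex.mul_I_re]
        rw [this, Real.exp_zero]
      rw [e3, e4, mul_one]
    have hun : ∀ t : ℝ, ‖u' t‖ = D t * ρ := by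
      intro t
      simp only [hu'def, hDdef]
      rw [norm_mul, norm_mul, Complex.norm_I, mul_one]
      have := hcirc t
      rw [this]
    calc 2*Real.pi * ‖a n‖ * ρ^n = ‖(2 * Real.pi : ℂ) * a n * (ρ:ℂ) ^ n‖ := hL.symm
      _ = ‖∫ t in (0:ℝ)..(2*Real.pi), u' t * v t‖ := by rw [key2, norm_neg]
      _ ≤ ∫ t in (0:ℝ)..(2*Real.pi), ‖u' t * v t‖ :=
          intervalIntegral.norm_integral_le_integral_norm (by positivity)
      _ ≤ ∫ t in (0:ℝ)..(2*Real.pi), (1/(n:ℝ)) * D t := by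
          apply intervalIntegral.integral_mono_on (by positivity) ?_ ?_ ?_
          · apply Continuous.intervalIntegrable
            apply Continuous.norm
            apply Continuous.mul
            · exact ((hdc.comp_continuous hcm hmem).mul (hcm.mul continuous_const))
            · fun_prop
          · exact (continuous_const.mul hDcont).intervalIntegrable _ _
          · intro t _
            rw [norm_mul, hun t, hvn t]
            have hD0 : 0 ≤ D t := norm_nonneg _
            have : D t * ρ ≤ D t := by nlinarith
            calc D t * ρ * (1/(n:ℝ)) ≤ D t * (1/(n:ℝ)) := by
                  apply mul_le_mul_of_nonneg_right this (by positivity)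
              _ = (1/(n:ℝ)) * D t := by ring
      _ = (1/(n:ℝ)) * ∫ t in (0:ℝ)..(2*Real.pi), D t := intervalIntegral.integral_const_mul _ _
  -- shift to a symmetric interval
  have hper : Function.Periodic D (2*Real.pi) := by
    intro s
    simp only [hDdef]
    have e : ((s + 2*Real.pi : ℝ):ℂ) * I = (s:ℂ)*I + 2*Real.pi*I := by push_cast; ring
    rw [e, Complex.exp_add, Complex.exp_two_pi_mul_I, mul_one]
  have hshift : ∫ t in (0:ℝ)..(2*Real.pi), D t = ∫ t in (-Real.pi)..Real.pi, D t := by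
    have h := hper.intervalIntegral_add_eq 0 (-Real.pi)
    simp only [zero_add] at h
    rw [h]
    have e : -Real.pi + 2*Real.pi = Real.pi := by ring
    rw [e]
  have hint : ∀ a b : ℝ, IntervalIntegrable D volume a b := fun a b => hDcont.intervalIntegrable a b
  have hintG : ∀ a b : ℝ, IntervalIntegrable G volume a b := fun a b => hGcont.intervalIntegrable a b
  have hsplit : ∫ t in (-Real.pi)..Real.pi, D t
      = (∫ t in (-Real.pi)..(0:ℝ), D t) + ∫ t in (0:ℝ)..Real.pi, D t :=
    (integral_add_adjacent_intervals (hint _ _) (hint _ _)).symm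
  have hneg : ∫ t in (-Real.pi)..(0:ℝ), D t = ∫ t in (0:ℝ)..Real.pi, D (-t) := by
    have h := intervalIntegral.integral_comp_neg (a := 0) (b := Real.pi) (f := D)
    rw [neg_zero] at h
    exact h.symm
  have hb1 : ∫ t in (0:ℝ)..Real.pi, D (-t) ≤ ∫ t in (0:ℝ)..Real.pi, G t := by
    apply intervalIntegral.integral_mono_on Real.pi_pos.le
      ((hDcont.comp continuous_neg).intervalIntegrable _ _) (hintG _ _)
    intro t _
    exact (hDG (-t)).trans_eq (hGsymm t)
  have hb2 : ∫ t in (0:ℝ)..Real.pi, D t ≤ ∫ t in (0:ℝ)..Real.pi, G t := by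
    apply intervalIntegral.integral_mono_on Real.pi_pos.le (hint _ _) (hintG _ _)
    intro t _
    exact hDG t
  -- estimate the G integral
  have hπm0 : 0 < Real.pi/m := by positivity
  have hπmπ : Real.pi/m ≤ Real.pi := div_le_self Real.pi_pos.le hm1
  have hGsplit : ∫ t in (0:ℝ)..Real.pi, G t
      = (∫ t in (0:ℝ)..(Real.pi/m), G t) + ∫ t in (Real.pi/m)..Real.pi, G t :=
    (integral_add_adjacent_intervals (hintG _ _) (hintG _ _)).symm
  have hmαe : (1/m) ^ (-(α+1)) = m^(α+1) := by
    rw [one_div, Real.inv_rpow hm0.le, Real.rpow_neg hm0.le, inv_inv]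
  have hG1 : ∀ t : ℝ, G t ≤ C₄ * m^(α+1) := by
    intro t
    simp only [hGdef]
    apply mul_le_mul_of_nonneg_left ?_ hC₄0
    rw [← hmαe]
    exact Real.rpow_le_rpow_of_nonpos (by positivity) (hlow1 t) (by linarith)
  have hp1 : ∫ t in (0:ℝ)..(Real.pi/m), G t ≤ C₄ * Real.pi * m^α := by
    calc ∫ t in (0:ℝ)..(Real.pi/m), G t ≤ ∫ _t in (0:ℝ)..(Real.pi/m), C₄ * m^(α+1) := by
          apply intervalIntegral.integral_mono_on hπm0.le (hintG _ _) intervalIntegrable_const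
          intro t _
          exact hG1 t
      _ = (Real.pi/m) * (C₄ * m^(α+1)) := by
          rw [intervalIntegral.integral_const, smul_eq_mul, sub_zero]
      _ = C₄ * Real.pi * m^α := by
          rw [Real.rpow_add hm0, Real.rpow_one]
          field_simp
  have hG2 : ∀ t ∈ Icc (Real.pi/m) Real.pi, G t ≤ C₄ * Real.pi^(α+1) * t^(-(α+1)) := by
    intro t ht
    have ht0 : 0 < t := lt_of_lt_of_le hπm0 ht.1
    have hlow := hlow2 t ⟨ht0.le, ht.2⟩
    have h1 : ‖1 - (ρ:ℂ)*Complex.exp ((t:ℂ)*I)‖^(-(α+1)) ≤ (t/Real.pi)^(-(α+1)) :=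
      Real.rpow_le_rpow_of_nonpos (by positivity) hlow (by linarith)
    have h2 : (t/Real.pi)^(-(α+1)) = Real.pi^(α+1) * t^(-(α+1)) := by
      rw [Real.div_rpow ht0.le Real.pi_pos.le, Real.rpow_neg Real.pi_pos.le, div_eq_mul_inv,
        inv_inv]
      ring
    simp only [hGdef]
    calc C₄ * ‖1 - (ρ:ℂ)*Complex.exp ((t:ℂ)*I)‖^(-(α+1)) ≤ C₄ * (t/Real.pi)^(-(α+1)) :=
          mul_le_mul_of_nonneg_left h1 hC₄0
      _ = C₄ * Real.pi^(α+1) * t^(-(α+1)) := by rw [h2]; ring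
  have hrint : ∫ t in (Real.pi/m)..Real.pi, t^(-(α+1))
      = ((Real.pi/m)^(-α) - Real.pi^(-α))/α := by
    rw [integral_rpow (Or.inr ⟨by linarith, notMem_uIcc_of_lt hπm0 Real.pi_pos⟩)]
    rw [show -(α+1)+1 = -α by ring]
    rw [div_eq_div_iff (neg_ne_zero.mpr hα.ne') hα.ne']
    ring
  have hp2 : ∫ t in (Real.pi/m)..Real.pi, G t ≤ C₄ * Real.pi * m^α / α := by
    have hππ : Real.pi^(α+1) * Real.pi^(-α) = Real.pi := by
      rw [← Real.rpow_add Real.pi_pos]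
      norm_num
    calc ∫ t in (Real.pi/m)..Real.pi, G t
        ≤ ∫ t in (Real.pi/m)..Real.pi, C₄ * Real.pi^(α+1) * t^(-(α+1)) := by
          apply intervalIntegral.integral_mono_on hπmπ (hintG _ _) ?_ hG2
          apply ContinuousOn.intervalIntegrable
          apply ContinuousOn.mul continuousOn_const
          apply ContinuousOn.rpow_const continuousOn_id
          intro t ht
          rw [uIcc_of_le hπmπ] at ht
          exact Or.inl (lt_of_lt_of_le hπm0 ht.1).ne'
      _ = C₄ * Real.pi^(α+1) * (((Real.pi/m)^(-α) - Real.pi^(-α))/α) := by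
          rw [intervalIntegral.integral_const_mul, hrint]
      _ ≤ C₄ * Real.pi^(α+1) * ((Real.pi/m)^(-α)/α) := by
          apply mul_le_mul_of_nonneg_left ?_ (by positivity)
          have hnn : (0:ℝ) ≤ Real.pi^(-α) := by positivity
          gcongr
          linarith
      _ = C₄ * Real.pi * m^α / α := by
          have e : Real.pi^(-α) / (m^α)⁻¹ = Real.pi^(-α) * m^α := by
            rw [div_eq_mul_inv, inv_inv]
          rw [Real.div_rpow Real.pi_pos.le hm0.le, Real.rpow_neg hm0.le, e]
          calc C₄ * Real.pi^(α+1) * (Real.pi^(-α) * m^α / α)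
              = C₄ * ((Real.pi^(α+1) * Real.pi^(-α)) * m^α / α) := by ring
            _ = C₄ * Real.pi * m^α / α := by rw [hππ]; ring
  -- total bound for the D integral
  have htot : ∫ t in (0:ℝ)..(2*Real.pi), D t ≤ 2 * (C₄ * Real.pi * m^α * (1 + 1/α)) := by
    have hGtot : ∫ t in (0:ℝ)..Real.pi, G t ≤ C₄ * Real.pi * m^α * (1 + 1/α) := by
      rw [hGsplit]
      have e : C₄ * Real.pi * m^α * (1 + 1/α) = C₄ * Real.pi * m^α + C₄ * Real.pi * m^α/α := by
        ring
      rw [e]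
      exact add_le_add hp1 hp2
    rw [hshift, hsplit, hneg]
    linarith [hb1, hb2]
  -- final arithmetic
  have hfin : 2*Real.pi * ‖a n‖ * ρ^n ≤ (1/(n:ℝ)) * (2 * (C₄ * Real.pi * m^α * (1 + 1/α))) :=
    hnorm1.trans (mul_le_mul_of_nonneg_left htot (by positivity))
  have hmα2 : m^α ≤ 2^α * (n:ℝ)^α := by
    have h1 : m ≤ 2*(n:ℝ) := by simp only [hmdef]; linarith
    calc m^α ≤ (2*(n:ℝ))^α := Real.rpow_le_rpow hm0.le h1 hα.le
      _ = 2^α * (n:ℝ)^α := Real.mul_rpow (by norm_num) hn0.le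
  have hnα : (n:ℝ)^α = (n:ℝ)^(α-1) * (n:ℝ) := by
    rw [← Real.rpow_add_one hn0.ne' (α-1)]
    norm_num
  have hρn : 1/3 ≤ ρ^n := by
    have h := SA_rho_pow n hn
    simp only [hρdef, hmdef]
    exact h
  have h3 : ‖a n‖ * ρ^n ≤ C₄ * (1 + 1/α) * 2^α * (n:ℝ)^(α-1) := by
    have hR : (1/(n:ℝ)) * (2 * (C₄ * Real.pi * m^α * (1 + 1/α)))
        ≤ 2*Real.pi*(C₄ * (1 + 1/α) * 2^α * (n:ℝ)^(α-1)) := by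
      calc (1/(n:ℝ)) * (2 * (C₄ * Real.pi * m^α * (1 + 1/α)))
          ≤ (1/(n:ℝ)) * (2 * (C₄ * Real.pi * (2^α * (n:ℝ)^α) * (1 + 1/α))) := by
            gcongr
        _ = 2*Real.pi*(C₄ * (1 + 1/α) * 2^α * (n:ℝ)^(α-1)) := by
            rw [hnα]
            field_simp
    have h2 := hfin.trans hR
    have h2' : 2*Real.pi*(‖a n‖ * ρ^n) ≤ 2*Real.pi*(C₄ * (1 + 1/α) * 2^α * (n:ℝ)^(α-1)) := by
      linarith
    exact le_of_mul_le_mul_left h2' (by positivity)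
  calc ‖a n‖ = 3 * (‖a n‖ * (1/3)) := by ring
    _ ≤ 3 * (‖a n‖ * ρ^n) := by
        apply mul_le_mul_of_nonneg_left (mul_le_mul_of_nonneg_left hρn (norm_nonneg _)) (by norm_num)
    _ ≤ 3 * (C₄ * (1 + 1/α) * 2^α * (n:ℝ)^(α-1)) := by linarith
    _ = (3 * 2^α * (C₄ * (1 + 1/α))) * (n:ℝ)^(α-1) := by ring



/-- O-transfer theorem of singularity analysis: if `f` is analytic on the open
unit disc, continuous on the closed disc minus `{1}`, analytic on a Δ-domain
`Δ(θ, r) = {z : ‖z‖ < r, z ≠ 1, θ < |Arg(z-1)|}` with `r > 1`, `0 < θ < π/2`,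
and `f(z) = O((1-z)^(-α))` as `z → 1` in `Δ` for some `α > 0`, then the Taylor
coefficients `a n` of `f` satisfy `‖a n‖ ≤ K·n^(α-1)` for all `n ≥ 1`. -/
theorem singularity_analysis_O_transfer
    (f : ℂ → ℂ) (a : ℕ → ℂ) (r θ α : ℝ)
    (hr : 1 < r) (hθ0 : 0 < θ) (hθ : θ < Real.pi / 2) (hα : 0 < α)
    (Δ : Set ℂ)
    (hΔ : Δ = {z : ℂ | ‖z‖ < r ∧ z ≠ 1 ∧ θ < |Complex.arg (z - 1)|})
    (hf_disc : DifferentiableOn ℂ f (ball 0 1))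
    (hf_cont : ContinuousOn f (closedBall 0 1 \ {1}))
    (hf_Δ : DifferentiableOn ℂ f Δ)
    (hcoeff : ∀ z ∈ ball (0 : ℂ) 1, HasSum (fun n : ℕ => a n * z ^ n) (f z))
    (hbigO : ∃ C : ℝ, ∀ z ∈ Δ, ‖f z‖ ≤ C * ‖(1 : ℂ) - z‖ ^ (-α)) :
    ∃ K : ℝ, ∀ n : ℕ, 1 ≤ n → ‖a n‖ ≤ K * (n : ℝ) ^ (α - 1) := by
  obtain ⟨C₀, hC₀⟩ := hbigO
  set C := max C₀ 0 with hCdef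
  have hC0 : 0 ≤ C := le_max_right _ _
  have hC : ∀ z ∈ Δ, ‖f z‖ ≤ C * ‖(1 : ℂ) - z‖ ^ (-α) := by
    intro z hz
    exact (hC₀ z hz).trans
      (mul_le_mul_of_nonneg_right (le_max_left _ _) (Real.rpow_nonneg (norm_nonneg _) _))
  obtain ⟨c, hc0, hder⟩ := SA_geo f r θ α hr hθ0 hθ hα Δ hΔ hf_Δ C hC0 hC
  refine ⟨3 * 2^α * ((C * 2^α / c) * (1 + 1/α)), fun n hn => ?_⟩
  exact SA_main f a α hα (C * 2^α / c) (by positivity) hf_disc hcoeff hder n hn
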